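/- Let k ≥ 3, m ≥ 0 and n ≥ k−1 be integers. Then #{Δ ∈ P_k(m,n) : d_1 = d_{k−1} ≥ 2 and 1 ≤ α_1 < d_1} = #{Δ ∈ P_k(m,n+1) : d_1 = d_{k−1} ≥ 2, α_1 > α_2, and α_1 ≥ 2}. -/

import Mathlib

/-- A partition: a finite nonincreasing list of positive integers. -/
structure Partn where
  parts : List ℕ
  sorted : parts.Pairwise (· ≥ ·)
  pos : ∀ x ∈ parts, 0 < x

namespace Partn

/-- The weight `|λ|` of a partition: the sum of its parts. -/
def wt (p : Partn) : ℕ := p.parts.sum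

/-- The length `ℓ(λ)`: the number of parts. -/
def len (p : Partn) : ℕ := p.parts.length

/-- The `j`-th largest part `λ_j` (1-indexed), with `λ_j = 0` for `j > ℓ(λ)`. -/
def part (p : Partn) (j : ℕ) : ℕ := p.parts.getD (j - 1) 0

/-- `f_j(λ)`: the number of parts of `λ` equal to `j`. -/
def freq (p : Partn) (j : ℕ) : ℕ := p.parts.count j

/-- The empty partition. -/
def empty : Partn := ⟨[], List.Pairwise.nil, by simp⟩

end Partn

/-- The type of `(2k-1)`-tuples `(α, β, γ^1, …, γ^{k-2}, ϖ^1, …, ϖ^{k-1})`. -/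
abbrev PTuple (k : ℕ) : Type :=
  Partn × Partn × (Fin (k - 2) → Partn) × (Fin (k - 1) → Partn)

/-- `d_j := ℓ(ϖ^j)` (1-indexed, `0` out of range). -/
def dIdx (k : ℕ) (w : Fin (k - 1) → Partn) (j : ℕ) : ℕ :=
  if h : j - 1 < k - 1 then (w ⟨j - 1, h⟩).len else 0

/-- `γ^j` (1-indexed, the empty partition out of range). -/
def gIdx (k : ℕ) (g : Fin (k - 2) → Partn) (j : ℕ) : Partn :=
  if h : j - 1 < k - 2 then g ⟨j - 1, h⟩ else Partn.empty

/-- Membership in Garvan-type set `P_k(m, n)` of `(2k-1)`-tuples of partitions. -/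
def PkMem (k : ℕ) (m : ℤ) (n : ℕ) (t : PTuple k) : Prop :=
  (∀ i : Fin (k - 1), (t.2.2.2 i).parts =
      List.replicate (t.2.2.2 i).len (t.2.2.2 i).len) ∧
  (∀ j, 1 ≤ j → j + 1 ≤ k - 1 → dIdx k t.2.2.2 (j + 1) ≤ dIdx k t.2.2.2 j) ∧
  1 ≤ dIdx k t.2.2.2 (k - 1) ∧
  (∀ x ∈ t.1.parts, x ≤ dIdx k t.2.2.2 (k - 1)) ∧
  (∀ x ∈ t.2.1.parts, x ≤ dIdx k t.2.2.2 (k - 1)) ∧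
  (t.1.len : ℤ) - (t.2.1.len : ℤ) = m ∧
  (∀ j, 1 ≤ j → j ≤ k - 2 →
      (gIdx k t.2.2.1 j).len ≤ dIdx k t.2.2.2 j - dIdx k t.2.2.2 (j + 1)) ∧
  t.1.wt + t.2.1.wt + (∑ i, (t.2.2.1 i).wt) + (∑ i, (t.2.2.2 i).wt) = n

private lemma Partn.ext' {p q : Partn} (h : p.parts = q.parts) : p = q := by
  cases p; cases q; simpa using h

/-- Increment the largest part of a list. -/
def bumpParts : List ℕ → List ℕ
  | [] => []
  | a :: r => (a + 1) :: r

lemma bumpParts_sorted {l : List ℕ} (h : l.Pairwise (· ≥ ·)) :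
    (bumpParts l).Pairwise (· ≥ ·) := by
  cases l with
  | nil => simpa [bumpParts] using h
  | cons a r =>
    simp only [bumpParts, List.pairwise_cons] at h ⊢
    exact ⟨fun b hb => le_trans (h.1 b hb) (Nat.le_succ a), h.2⟩

lemma bumpParts_pos {l : List ℕ} (h : ∀ x ∈ l, 0 < x) :
    ∀ x ∈ bumpParts l, 0 < x := by
  cases l with
  | nil => simpa [bumpParts] using h
  | cons a r =>
    intro x hx
    rcases List.mem_cons.1 hx with rfl | hx
    · exact Nat.succ_pos a
    · exact h x (List.mem_cons_of_mem a hx)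

/-- Increment the largest part of a partition. -/
def Partn.bump (p : Partn) : Partn :=
  ⟨bumpParts p.parts, bumpParts_sorted p.sorted, bumpParts_pos p.pos⟩

lemma Partn.bump_len (p : Partn) : p.bump.len = p.len := by
  cases h : p.parts with
  | nil => simp [Partn.bump, Partn.len, h, bumpParts]
  | cons a r => simp [Partn.bump, Partn.len, h, bumpParts]

lemma Partn.bump_wt (p : Partn) (hne : p.parts ≠ []) : p.bump.wt = p.wt + 1 := by
  cases h : p.parts with
  | nil => exact absurd h hne
  | cons a r => simp [Partn.bump, Partn.wt, h, bumpParts]; ring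

/-- The map on tuples: bump the `α` component. -/
def bumpT (k : ℕ) (t : PTuple k) : PTuple k := (t.1.bump, t.2)

/-- Lemma 5.8 (restated). -/
theorem lem_pp5 (k : ℕ) (m : ℤ) (n : ℕ) (hk : 3 ≤ k) (hm : 0 ≤ m)
    (hn : k - 1 ≤ n) :
    {t : PTuple k | PkMem k m n t ∧
        dIdx k t.2.2.2 1 = dIdx k t.2.2.2 (k - 1) ∧ 2 ≤ dIdx k t.2.2.2 1 ∧
        1 ≤ t.1.part 1 ∧ t.1.part 1 < dIdx k t.2.2.2 1}.ncard =
      {t : PTuple k | PkMem k m (n + 1) t ∧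
        dIdx k t.2.2.2 1 = dIdx k t.2.2.2 (k - 1) ∧ 2 ≤ dIdx k t.2.2.2 1 ∧
        t.1.part 2 < t.1.part 1 ∧ 2 ≤ t.1.part 1}.ncard := by
  classical
  set S := {t : PTuple k | PkMem k m n t ∧
        dIdx k t.2.2.2 1 = dIdx k t.2.2.2 (k - 1) ∧ 2 ≤ dIdx k t.2.2.2 1 ∧
        1 ≤ t.1.part 1 ∧ t.1.part 1 < dIdx k t.2.2.2 1} with hS
  set T := {t : PTuple k | PkMem k m (n + 1) t ∧
        dIdx k t.2.2.2 1 = dIdx k t.2.2.2 (k - 1) ∧ 2 ≤ dIdx k t.2.2.2 1 ∧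
        t.1.part 2 < t.1.part 1 ∧ 2 ≤ t.1.part 1} with hT
  -- every element of S has nonempty α
  have hSne : ∀ t ∈ S, t.1.parts ≠ [] := by
    intro t ht h
    have h1 : (1 : ℕ) ≤ t.1.part 1 := ht.2.2.2.1
    simp [Partn.part, h] at h1
  have himg : T = bumpT k '' S := by
    ext t
    constructor
    · intro ht
      obtain ⟨hmem, hd, hd2, hlt, h2⟩ := ht
      -- α is nonempty since part 1 ≥ 2
      cases hparts : t.1.parts with
      | nil => simp [Partn.part, hparts] at h2
      | cons a r =>
        have ha2 : 2 ≤ a := by simpa [Partn.part, hparts] using h2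
        have hlt' : r.getD 0 0 < a := by simpa [Partn.part, hparts] using hlt
        have hsorted : ((a - 1) :: r).Pairwise (· ≥ ·) := by
          have hs := t.1.sorted
          rw [hparts] at hs
          simp only [List.pairwise_cons] at hs ⊢
          refine ⟨?_, hs.2⟩
          intro b hb
          have hb_le : b ≤ r.getD 0 0 := by
            cases hr : r with
            | nil => simp [hr] at hb
            | cons c r' =>
              rw [hr] at hb
              rcases List.mem_cons.1 hb with rfl | hb'
              · simp [hr]
              · have := hs.2
                rw [hr] at this
                simp only [List.pairwise_cons] at this
                exact le_trans (this.1 b hb') (by simp [hr])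
          omega
        have hpos : ∀ x ∈ (a - 1) :: r, 0 < x := by
          intro x hx
          rcases List.mem_cons.1 hx with rfl | hx
          · omega
          · exact t.1.pos x (by rw [hparts]; exact List.mem_cons_of_mem a hx)
        refine ⟨(⟨(a - 1) :: r, hsorted, hpos⟩, t.2), ?_, ?_⟩
        · -- membership in S
          obtain ⟨c1, c2, c3, c4, c5, c6, c7, c8⟩ := hmem
          have halen : (⟨(a - 1) :: r, hsorted, hpos⟩ : Partn).len = t.1.len := by
            simp [Partn.len, hparts]
          have hawt : (⟨(a - 1) :: r, hsorted, hpos⟩ : Partn).wt + 1 = t.1.wt := by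
            simp [Partn.wt, hparts]; omega
          refine ⟨⟨c1, c2, c3, ?_, c5, ?_, c7, ?_⟩, hd, hd2, ?_, ?_⟩
          · intro x hx
            rcases List.mem_cons.1 hx with rfl | hx
            · show a - 1 ≤ dIdx k t.2.2.2 (k - 1)
              have := c4 a (by rw [hparts]; exact List.mem_cons_self)
              omega
            · exact c4 x (by rw [hparts]; exact List.mem_cons_of_mem a hx)
          · rw [show ((⟨(a - 1) :: r, hsorted, hpos⟩ : Partn), t.2).1.len = t.1.len
              from halen]
            exact c6
          · show (⟨(a - 1) :: r, hsorted, hpos⟩ : Partn).wt + t.2.1.wt +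
                (∑ i, (t.2.2.1 i).wt) + (∑ i, (t.2.2.2 i).wt) = n
            omega
          · show 1 ≤ (⟨(a - 1) :: r, hsorted, hpos⟩ : Partn).part 1
            simp [Partn.part]; omega
          · have haled : a ≤ dIdx k t.2.2.2 (k - 1) :=
              c4 a (by rw [hparts]; exact List.mem_cons_self)
            show (⟨(a - 1) :: r, hsorted, hpos⟩ : Partn).part 1 < dIdx k t.2.2.2 1
            have : (⟨(a - 1) :: r, hsorted, hpos⟩ : Partn).part 1 = a - 1 := by
              simp [Partn.part]
            omega
        · -- bumpT maps back to t
          refine Prod.ext ?_ rfl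
          apply Partn.ext'
          show bumpParts ((a - 1) :: r) = t.1.parts
          rw [hparts]
          simp [bumpParts]
          omega
    · rintro ⟨s, hs, rfl⟩
      obtain ⟨hmem, hd, hd2, h1, hlt⟩ := hs
      have hne := hSne s ⟨hmem, hd, hd2, h1, hlt⟩
      cases hparts : s.1.parts with
      | nil => exact absurd hparts hne
      | cons a r =>
        have ha1 : 1 ≤ a := by simpa [Partn.part, hparts] using h1
        have halt : a < dIdx k s.2.2.2 1 := by
          simpa [Partn.part, hparts] using hlt
        obtain ⟨c1, c2, c3, c4, c5, c6, c7, c8⟩ := hmem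
        have hbparts : (bumpT k s).1.parts = (a + 1) :: r := by
          simp [bumpT, Partn.bump, hparts, bumpParts]
        refine ⟨⟨c1, c2, c3, ?_, c5, ?_, c7, ?_⟩, hd, hd2, ?_, ?_⟩
        · intro x hx
          rw [hbparts] at hx
          rcases List.mem_cons.1 hx with rfl | hx
          · show a + 1 ≤ dIdx k s.2.2.2 (k - 1)
            omega
          · exact c4 x (by rw [hparts]; exact List.mem_cons_of_mem a hx)
        · show ((bumpT k s).1.len : ℤ) - _ = m
          rw [show (bumpT k s).1.len = s.1.len from s.1.bump_len]
          exact c6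
        · show (bumpT k s).1.wt + s.2.1.wt + (∑ i, (s.2.2.1 i).wt) +
              (∑ i, (s.2.2.2 i).wt) = n + 1
          rw [show (bumpT k s).1.wt = s.1.wt + 1 from s.1.bump_wt hne]
          omega
        · -- part 2 < part 1
          have hs2 : s.1.part 2 ≤ a := by
            have hsord := s.1.sorted
            rw [hparts] at hsord
            simp only [List.pairwise_cons] at hsord
            cases hr : r with
            | nil => simp [Partn.part, hparts, hr]
            | cons c r' =>
              have : c ≤ a := hsord.1 c (by rw [hr]; exact List.mem_cons_self)
              simp [Partn.part, hparts, hr]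
              omega
          have hb1 : (bumpT k s).1.part 1 = a + 1 := by
            simp [Partn.part, hbparts]
          have hb2 : (bumpT k s).1.part 2 = s.1.part 2 := by
            simp [Partn.part, hbparts, hparts]
          omega
        · have hb1 : (bumpT k s).1.part 1 = a + 1 := by
            simp [Partn.part, hbparts]
          omega
  have hinj : Set.InjOn (bumpT k) S := by
    intro s hs s' hs' heq
    have hne := hSne s hs
    have hne' := hSne s' hs'
    have h2 : (bumpT k s).2 = (bumpT k s').2 := congrArg Prod.snd heq
    have h1 : (bumpT k s).1 = (bumpT k s').1 := congrArg Prod.fst heq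

    have h1p : bumpParts s.1.parts = bumpParts s'.1.parts :=
      congrArg Partn.parts (show s.1.bump = s'.1.bump from h1)
    cases hp : s.1.parts with
    | nil => exact absurd hp hne
    | cons a r =>
      cases hp' : s'.1.parts with
      | nil => exact absurd hp' hne'
      | cons a' r' =>
        rw [hp, hp'] at h1p
        simp only [bumpParts, List.cons.injEq] at h1p
        have : s.1 = s'.1 := Partn.ext' (by rw [hp, hp']; simp only [List.cons.injEq]; exact ⟨by omega, h1p.2⟩)
        exact Prod.ext this (show s.2 = s'.2 from h2)
  rw [show T = bumpT k '' S from himg, Set.ncard_image_of_injOn hinj]
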